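/- Let B > 0, γ > 0, let h ∈ C([0,B]) with 0 ≤ h(x) ≤ γ for all x, and let ψ_b : (0,1] → ℝ with 0 ≤ ψ_b(μ) ≤ γ for all μ ∈ (0,1]. Define ψ : [0,B]×([-1,1]\{0}) → ℝ by ψ(x,μ) = ψ_b(μ) e^{-x/μ} + ∫₀ˣ μ⁻¹ e^{-(x-s)/μ} h(s) ds for μ > 0, and ψ(x,μ) = ψ_b(−μ) e^{(2B−x)/μ} − ∫₀^B μ⁻¹ e^{(2B−x−s)/μ} h(s) ds − ∫ₓ^B μ⁻¹ e^{-(x-s)/μ} h(s) ds for μ < 0. Then for every μ ≠ 0, x ↦ ψ(x,μ) is continuously differentiable on [0,B] and μ ∂_x ψ(x,μ) + ψ(x,μ) = h(x) for all x ∈ [0,B]; ψ(0,μ) = ψ_b(μ) and ψ(B,μ) = ψ(B,−μ) for all μ ∈ (0,1]; 0 ≤ ψ(x,μ) ≤ γ for all x ∈ [0,B] and μ ≠ 0; and ψ is the unique function with these regularity, equation and boundary properties. -/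

import Mathlib

open MeasureTheory Set

lemma ftc_icc {B : ℝ} {f : ℝ → ℝ} (hf : ContinuousOn f (Icc 0 B)) {a x : ℝ}
    (ha : a ∈ Icc (0:ℝ) B) (hx : x ∈ Icc (0:ℝ) B) :
    HasDerivWithinAt (fun y => ∫ s in a..y, f s) (f x) (Icc 0 B) x := by
  haveI : Fact (x ∈ Icc (0:ℝ) B) := ⟨hx⟩
  exact intervalIntegral.integral_hasDerivWithinAt_right
    ((hf.mono (uIcc_subset_Icc ha hx)).intervalIntegrable)
    ⟨Icc 0 B, self_mem_nhdsWithin, (hf.aestronglyMeasurable measurableSet_Icc)⟩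
    (hf x hx)

lemma exp_int (μ a b : ℝ) (hμ : μ ≠ 0) :
    ∫ s in a..b, μ⁻¹ * Real.exp (s / μ) = Real.exp (b/μ) - Real.exp (a/μ) := by
  rw [intervalIntegral.integral_const_mul, intervalIntegral.integral_comp_div (f := Real.exp) hμ]
  rw [integral_exp]
  field_simp
  simp only [smul_eq_mul]

lemma transport_deriv {B : ℝ} {h : ℝ → ℝ} (hhc : ContinuousOn h (Icc 0 B))
    {μ : ℝ} (hμ : μ ≠ 0) {a : ℝ} (ha : a ∈ Icc (0:ℝ) B) (C : ℝ)
    {x : ℝ} (hx : x ∈ Icc (0:ℝ) B) :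
    HasDerivWithinAt (fun y => Real.exp (-y/μ) * (C + μ⁻¹ * ∫ s in a..y, Real.exp (s/μ) * h s))
      (μ⁻¹ * (h x - Real.exp (-x/μ) * (C + μ⁻¹ * ∫ s in a..x, Real.exp (s/μ) * h s)))
      (Icc 0 B) x := by
  have hf : ContinuousOn (fun s => Real.exp (s/μ) * h s) (Icc 0 B) :=
    ((Real.continuous_exp.comp (continuous_id.div_const μ)).continuousOn).mul hhc
  have h1 := ftc_icc hf ha hx
  have h2 : HasDerivWithinAt (fun y => Real.exp (-y/μ)) (Real.exp (-x/μ) * (-1/μ)) (Icc 0 B) x := by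
    have hd : HasDerivAt (fun y : ℝ => -y/μ) (-1/μ) x := by
      simpa using ((hasDerivAt_id x).neg.div_const μ)
    exact hd.exp.hasDerivWithinAt
  have hprod := h2.mul ((h1.const_mul μ⁻¹).const_add C)
  convert hprod using 1
  · rfl
  · rfl
  · rfl
  have key : Real.exp (-x/μ) * Real.exp (x/μ) = 1 := by
    rw [← Real.exp_add]; ring_nf; exact Real.exp_zero
  linear_combination (-(μ⁻¹ * h x)) * key

lemma ode_const {B μ : ℝ} (hμ : μ ≠ 0) {w w' : ℝ → ℝ}
    (hw : ∀ x ∈ Icc (0:ℝ) B, HasDerivWithinAt w (w' x) (Icc 0 B) x)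
    (heq : ∀ x ∈ Icc (0:ℝ) B, μ * w' x + w x = 0) :
    ∀ x ∈ Icc (0:ℝ) B, Real.exp (x/μ) * w x = w 0 := by
  intro x hx
  have hg : ∀ y ∈ Icc (0:ℝ) B,
      HasDerivWithinAt (fun z => Real.exp (z/μ) * w z) 0 (Icc 0 B) y := by
    intro y hy
    have hd : HasDerivAt (fun z : ℝ => Real.exp (z/μ)) (Real.exp (y/μ) * (1/μ)) y := by
      have : HasDerivAt (fun z : ℝ => z/μ) (1/μ) y := by
        simpa using (hasDerivAt_id y).div_const μ
      exact this.exp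
    have := hd.hasDerivWithinAt.mul (hw y hy)
    convert this using 1
    · rfl
    · rfl
    · rfl
    have hy2 := heq y hy
    have hkey : Real.exp (y / μ) * (1 / μ) * w y + Real.exp (y / μ) * w' y
        = (Real.exp (y / μ) * (1/μ)) * (μ * w' y + w y) := by
      field_simp
      ring
    rw [hkey, hy2, mul_zero]
  have hcont : ContinuousOn (fun z => Real.exp (z/μ) * w z) (Icc 0 B) :=
    fun y hy => (hg y hy).continuousWithinAt
  have := constant_of_has_deriv_right_zero hcont (fun y hy =>
    (hg y (Ico_subset_Icc_self hy)).mono_of_mem_nhdsWithin (Icc_mem_nhdsGE_of_mem hy)) x hx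
  simpa using this

theorem stmt_12 (B γ : ℝ) (hB : 0 < B) (hγ : 0 < γ)
    (h : ℝ → ℝ) (hhc : ContinuousOn h (Set.Icc 0 B))
    (hhbd : ∀ x ∈ Set.Icc (0:ℝ) B, h x ∈ Set.Icc 0 γ)
    (ψb : ℝ → ℝ) (hψb : ∀ μ ∈ Set.Ioc (0:ℝ) 1, ψb μ ∈ Set.Icc 0 γ)
    (ψ : ℝ → ℝ → ℝ)
    (hψpos : ∀ μ ∈ Set.Ioc (0:ℝ) 1, ∀ x ∈ Set.Icc (0:ℝ) B,
      ψ x μ = ψb μ * Real.exp (-x / μ)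
        + ∫ s in (0:ℝ)..x, μ⁻¹ * Real.exp (-(x - s) / μ) * h s)
    (hψneg : ∀ μ ∈ Set.Ico (-1:ℝ) 0, ∀ x ∈ Set.Icc (0:ℝ) B,
      ψ x μ = ψb (-μ) * Real.exp ((2*B - x) / μ)
        - (∫ s in (0:ℝ)..B, μ⁻¹ * Real.exp ((2*B - x - s) / μ) * h s)
        - (∫ s in x..B, μ⁻¹ * Real.exp (-(x - s) / μ) * h s)) :
    -- ψ is C¹ in x for each μ ≠ 0 and solves the transport equation
    (∃ ψ' : ℝ → ℝ → ℝ, ∀ μ ∈ Set.Icc (-1:ℝ) 1, μ ≠ 0 →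
      (∀ x ∈ Set.Icc (0:ℝ) B, HasDerivWithinAt (fun y => ψ y μ) (ψ' x μ) (Set.Icc 0 B) x) ∧
      ContinuousOn (fun x => ψ' x μ) (Set.Icc 0 B) ∧
      (∀ x ∈ Set.Icc (0:ℝ) B, μ * ψ' x μ + ψ x μ = h x)) ∧
    -- boundary conditions
    (∀ μ ∈ Set.Ioc (0:ℝ) 1, ψ 0 μ = ψb μ ∧ ψ B μ = ψ B (-μ)) ∧
    -- bounds
    (∀ x ∈ Set.Icc (0:ℝ) B, ∀ μ ∈ Set.Icc (-1:ℝ) 1, μ ≠ 0 → ψ x μ ∈ Set.Icc 0 γ) ∧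
    -- uniqueness
    (∀ χ : ℝ → ℝ → ℝ,
      (∃ χ' : ℝ → ℝ → ℝ, ∀ μ ∈ Set.Icc (-1:ℝ) 1, μ ≠ 0 →
        (∀ x ∈ Set.Icc (0:ℝ) B,
          HasDerivWithinAt (fun y => χ y μ) (χ' x μ) (Set.Icc 0 B) x) ∧
        ContinuousOn (fun x => χ' x μ) (Set.Icc 0 B) ∧
        (∀ x ∈ Set.Icc (0:ℝ) B, μ * χ' x μ + χ x μ = h x)) →
      (∀ μ ∈ Set.Ioc (0:ℝ) 1, χ 0 μ = ψb μ ∧ χ B μ = χ B (-μ)) →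
      ∀ x ∈ Set.Icc (0:ℝ) B, ∀ μ ∈ Set.Icc (-1:ℝ) 1, μ ≠ 0 → χ x μ = ψ x μ) := by
  have h0m : (0:ℝ) ∈ Icc (0:ℝ) B := ⟨le_refl 0, hB.le⟩
  have hBmm : B ∈ Icc (0:ℝ) B := ⟨hB.le, le_refl B⟩
  -- canonical form
  have hcanon : ∀ μ ∈ Icc (-1:ℝ) 1, μ ≠ 0 → ∃ a, a ∈ Icc (0:ℝ) B ∧ ∃ C : ℝ,
      ∀ x ∈ Icc (0:ℝ) B,
        ψ x μ = Real.exp (-x/μ) * (C + μ⁻¹ * ∫ s in a..x, Real.exp (s/μ) * h s) := by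
    intro μ hμm hμ
    rcases lt_or_gt_of_ne hμ with hneg | hpos
    · refine ⟨B, hBmm, ψb (-μ) * Real.exp (2*B/μ)
        - μ⁻¹ * Real.exp (2*B/μ) * ∫ s in (0:ℝ)..B, Real.exp (-s/μ) * h s, ?_⟩
      intro x hx
      rw [hψneg μ ⟨hμm.1, hneg⟩ x hx]
      have e1 : (∫ s in (0:ℝ)..B, μ⁻¹ * Real.exp ((2*B - x - s) / μ) * h s)
          = Real.exp (-x/μ) * μ⁻¹ * Real.exp (2*B/μ)
            * ∫ s in (0:ℝ)..B, Real.exp (-s/μ) * h s := by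
        rw [← intervalIntegral.integral_const_mul]
        refine intervalIntegral.integral_congr fun s _ => ?_
        rw [show (2*B - x - s)/μ = -x/μ + 2*B/μ + -s/μ by ring, Real.exp_add, Real.exp_add]
        ring
      have e2 : (∫ s in x..B, μ⁻¹ * Real.exp (-(x - s) / μ) * h s)
          = Real.exp (-x/μ) * μ⁻¹ * ∫ s in x..B, Real.exp (s/μ) * h s := by
        rw [← intervalIntegral.integral_const_mul]
        refine intervalIntegral.integral_congr fun s _ => ?_
        rw [show -(x - s)/μ = -x/μ + s/μ by ring, Real.exp_add]
        ring
      rw [e1, e2, intervalIntegral.integral_symm x B,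
        show (2*B - x)/μ = -x/μ + 2*B/μ by ring, Real.exp_add]
      ring
    · refine ⟨0, h0m, ψb μ, ?_⟩
      intro x hx
      rw [hψpos μ ⟨hpos, hμm.2⟩ x hx]
      have e1 : (∫ s in (0:ℝ)..x, μ⁻¹ * Real.exp (-(x - s) / μ) * h s)
          = Real.exp (-x/μ) * (μ⁻¹ * ∫ s in (0:ℝ)..x, Real.exp (s/μ) * h s) := by
        rw [← intervalIntegral.integral_const_mul, ← intervalIntegral.integral_const_mul]
        refine intervalIntegral.integral_congr fun s _ => ?_
        rw [show -(x - s)/μ = -x/μ + s/μ by ring, Real.exp_add]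
        ring
      rw [e1]; ring
  -- derivative
  have hψd : ∀ μ ∈ Icc (-1:ℝ) 1, μ ≠ 0 → ∀ x ∈ Icc (0:ℝ) B,
      HasDerivWithinAt (fun y => ψ y μ) (μ⁻¹ * (h x - ψ x μ)) (Icc 0 B) x := by
    intro μ hμm hμ x hx
    obtain ⟨a, ha, C, hC⟩ := hcanon μ hμm hμ
    have hd := transport_deriv hhc hμ ha C hx
    rw [hC x hx]
    exact hd.congr (fun y hy => hC y hy) (hC x hx)
  have hψc : ∀ μ ∈ Icc (-1:ℝ) 1, μ ≠ 0 → ContinuousOn (fun x => ψ x μ) (Icc (0:ℝ) B) :=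
    fun μ hμm hμ x hx => (hψd μ hμm hμ x hx).continuousWithinAt
  have part2 : ∀ μ ∈ Set.Ioc (0:ℝ) 1, ψ 0 μ = ψb μ ∧ ψ B μ = ψ B (-μ) := by
    intro μ hμ
    constructor
    · rw [hψpos μ hμ 0 h0m]
      simp
    · have hνm : -μ ∈ Ico (-1:ℝ) 0 := ⟨by linarith [hμ.2], by linarith [hμ.1]⟩
      rw [hψpos μ hμ B hBmm, hψneg (-μ) hνm B hBmm]
      have e4 : (∫ s in (0:ℝ)..B, (-μ)⁻¹ * Real.exp ((2*B - B - s) / (-μ)) * h s)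
          = -∫ s in (0:ℝ)..B, μ⁻¹ * Real.exp (-(B - s)/μ) * h s := by
        rw [← intervalIntegral.integral_neg]
        refine intervalIntegral.integral_congr fun s _ => ?_
        rw [inv_neg, show (2*B - B - s) = (B - s) by ring, div_neg, neg_div]
        ring
      rw [e4, neg_neg, show (2*B - B)/(-μ) = -B/μ by
        rw [div_neg, neg_div, show 2*B - B = B by ring]]
      simp [intervalIntegral.integral_same]
  have hii : ∀ (c : ℝ → ℝ), Continuous c → ∀ a b : ℝ, a ∈ Icc (0:ℝ) B → b ∈ Icc (0:ℝ) B →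
      IntervalIntegrable (fun s => c s * h s) volume a b := fun c hc a b ha hb =>
    ((hc.continuousOn.mul (hhc.mono (uIcc_subset_Icc ha hb))).intervalIntegrable)
  have part3 : ∀ x ∈ Set.Icc (0:ℝ) B, ∀ μ ∈ Set.Icc (-1:ℝ) 1, μ ≠ 0 →
      ψ x μ ∈ Set.Icc 0 γ := by
    intro x hx μ hμm hμ
    have hxm : x ∈ Icc (0:ℝ) B := hx
    rcases lt_or_gt_of_ne hμ with hneg | hpos
    · -- negative μ
      have hbm : ψb (-μ) ∈ Icc (0:ℝ) γ := hψb (-μ) ⟨by linarith, by linarith [hμm.1]⟩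
      rw [hψneg μ ⟨hμm.1, hneg⟩ x hx, Set.mem_Icc]
      have hc1 : Continuous fun s : ℝ => μ⁻¹ * Real.exp ((2*B - x - s)/μ) := by
        fun_prop
      have hc2 : Continuous fun s : ℝ => μ⁻¹ * Real.exp (-(x - s)/μ) := by
        fun_prop
      have int1 := hii _ hc1 0 B h0m hBmm
      have int2 := hii _ hc2 x B hxm hBmm
      have hnp1 : (∫ s in (0:ℝ)..B, μ⁻¹ * Real.exp ((2*B - x - s)/μ) * h s) ≤ 0 := by
        have := intervalIntegral.integral_mono_on (f := fun s => μ⁻¹ * Real.exp ((2*B - x - s)/μ) * h s)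
          (g := fun _ => (0:ℝ)) hB.le int1 intervalIntegrable_const (fun s hs => by
            have hh := hhbd s hs
            have : μ⁻¹ * Real.exp ((2*B - x - s)/μ) ≤ 0 :=
              mul_nonpos_iff.mpr (Or.inr ⟨inv_nonpos.2 hneg.le, (Real.exp_pos _).le⟩)
            exact mul_nonpos_iff.mpr (Or.inr ⟨this, hh.1⟩))
        simpa using this
      have hnp2 : (∫ s in x..B, μ⁻¹ * Real.exp (-(x - s)/μ) * h s) ≤ 0 := by
        have := intervalIntegral.integral_mono_on (f := fun s => μ⁻¹ * Real.exp (-(x - s)/μ) * h s)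
          (g := fun _ => (0:ℝ)) hx.2 int2 intervalIntegrable_const (fun s hs => by
            have hh := hhbd s ⟨le_trans hx.1 hs.1, hs.2⟩
            have : μ⁻¹ * Real.exp (-(x - s)/μ) ≤ 0 :=
              mul_nonpos_iff.mpr (Or.inr ⟨inv_nonpos.2 hneg.le, (Real.exp_pos _).le⟩)
            exact mul_nonpos_iff.mpr (Or.inr ⟨this, hh.1⟩))
        simpa using this
      constructor
      · have : 0 ≤ ψb (-μ) * Real.exp ((2*B - x)/μ) :=
          mul_nonneg hbm.1 (Real.exp_pos _).le
        linarith
      · -- upper bound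
        have hlow1 : γ * (Real.exp ((2*B-x)/μ) - Real.exp ((B-x)/μ))
            ≤ ∫ s in (0:ℝ)..B, μ⁻¹ * Real.exp ((2*B - x - s)/μ) * h s := by
          have hmono := intervalIntegral.integral_mono_on
            (f := fun s => μ⁻¹ * Real.exp ((2*B - x - s)/μ) * γ)
            (g := fun s => μ⁻¹ * Real.exp ((2*B - x - s)/μ) * h s)
            hB.le ((hc1.mul continuous_const).intervalIntegrable _ _) int1 (fun s hs =>
              mul_le_mul_of_nonpos_left (hhbd s hs).2
                (mul_nonpos_iff.mpr (Or.inr ⟨inv_nonpos.2 hneg.le, (Real.exp_pos _).le⟩)))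
          have hK1 : (∫ s in (0:ℝ)..B, μ⁻¹ * Real.exp ((2*B - x - s)/μ) * γ)
              = γ * (Real.exp ((2*B-x)/μ) - Real.exp ((B-x)/μ)) := by
            have hpt : ∀ s:ℝ, μ⁻¹ * Real.exp ((2*B - x - s)/μ) * γ
                = (-(γ * Real.exp ((2*B-x)/μ))) * ((-μ)⁻¹ * Real.exp (s/(-μ))) := by
              intro s
              rw [show (2*B - x - s)/μ = (2*B - x)/μ + s/(-μ) by
                rw [div_neg, ← sub_eq_add_neg, div_sub_div_same], Real.exp_add, inv_neg]
              ring
            rw [intervalIntegral.integral_congr fun s _ => hpt s,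
              intervalIntegral.integral_const_mul, exp_int (-μ) 0 B (neg_ne_zero.2 hμ)]
            have key : Real.exp ((2*B-x)/μ) * Real.exp (B/(-μ)) = Real.exp ((B-x)/μ) := by
              rw [← Real.exp_add]
              congr 1
              rw [div_neg, ← sub_eq_add_neg, div_sub_div_same]
              ring_nf
            simp only [zero_div, Real.exp_zero]
            linear_combination (-γ) * key
          rw [hK1] at hmono
          exact hmono
        have hlow2 : γ * (Real.exp ((B-x)/μ) - 1)
            ≤ ∫ s in x..B, μ⁻¹ * Real.exp (-(x - s)/μ) * h s := by
          have hmono := intervalIntegral.integral_mono_on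
            (f := fun s => μ⁻¹ * Real.exp (-(x - s)/μ) * γ)
            (g := fun s => μ⁻¹ * Real.exp (-(x - s)/μ) * h s)
            hx.2 ((hc2.mul continuous_const).intervalIntegrable _ _) int2 (fun s hs =>
              mul_le_mul_of_nonpos_left (hhbd s ⟨le_trans hx.1 hs.1, hs.2⟩).2
                (mul_nonpos_iff.mpr (Or.inr ⟨inv_nonpos.2 hneg.le, (Real.exp_pos _).le⟩)))
          have hK2 : (∫ s in x..B, μ⁻¹ * Real.exp (-(x - s)/μ) * γ)
              = γ * (Real.exp ((B-x)/μ) - 1) := by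
            have hpt : ∀ s:ℝ, μ⁻¹ * Real.exp (-(x - s)/μ) * γ
                = (γ * Real.exp (-x/μ)) * (μ⁻¹ * Real.exp (s/μ)) := by
              intro s
              rw [show -(x - s)/μ = -x/μ + s/μ by
                rw [← add_div]; congr 1; ring, Real.exp_add]
              ring
            rw [intervalIntegral.integral_congr fun s _ => hpt s,
              intervalIntegral.integral_const_mul, exp_int μ x B hμ]
            have key1 : Real.exp (-x/μ) * Real.exp (B/μ) = Real.exp ((B-x)/μ) := by
              rw [← Real.exp_add]
              congr 1
              rw [← add_div]; congr 1; ring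
            have key2 : Real.exp (-x/μ) * Real.exp (x/μ) = 1 := by
              rw [← Real.exp_add]; ring_nf; exact Real.exp_zero
            linear_combination γ * key1 - γ * key2
          rw [hK2] at hmono
          exact hmono
        have hub : ψb (-μ) * Real.exp ((2*B - x)/μ) ≤ γ * Real.exp ((2*B - x)/μ) :=
          mul_le_mul_of_nonneg_right hbm.2 (Real.exp_pos _).le
        linarith
    · -- positive μ
      have hμΙ : μ ∈ Ioc (0:ℝ) 1 := ⟨hpos, hμm.2⟩
      have hbm := hψb μ hμΙ
      rw [hψpos μ hμΙ x hx, Set.mem_Icc]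
      have hc1 : Continuous fun s : ℝ => μ⁻¹ * Real.exp (-(x - s)/μ) := by
        fun_prop
      have int1 := hii _ hc1 0 x h0m hxm
      constructor
      · refine add_nonneg (mul_nonneg hbm.1 (Real.exp_pos _).le) ?_
        refine intervalIntegral.integral_nonneg hx.1 fun s hs => ?_
        have hh := hhbd s ⟨hs.1, le_trans hs.2 hx.2⟩
        exact mul_nonneg (by positivity) hh.1
      · have hIle := intervalIntegral.integral_mono_on
          (f := fun s => μ⁻¹ * Real.exp (-(x - s)/μ) * h s)
          (g := fun s => μ⁻¹ * Real.exp (-(x - s)/μ) * γ)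
          hx.1 int1 ((hc1.mul continuous_const).intervalIntegrable _ _) (fun s hs =>
            mul_le_mul_of_nonneg_left (hhbd s ⟨hs.1, le_trans hs.2 hx.2⟩).2 (by positivity))
        have hK : (∫ s in (0:ℝ)..x, μ⁻¹ * Real.exp (-(x - s)/μ) * γ)
            = γ * (1 - Real.exp (-x/μ)) := by
          have hpt : ∀ s:ℝ, μ⁻¹ * Real.exp (-(x - s)/μ) * γ
              = (γ * Real.exp (-x/μ)) * (μ⁻¹ * Real.exp (s/μ)) := by
            intro s
            rw [show -(x - s)/μ = -x/μ + s/μ by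
              rw [← add_div]; congr 1; ring, Real.exp_add]
            ring
          rw [intervalIntegral.integral_congr fun s _ => hpt s,
            intervalIntegral.integral_const_mul, exp_int μ 0 x hμ]
          have key : Real.exp (-x/μ) * Real.exp (x/μ) = 1 := by
            rw [← Real.exp_add]; ring_nf; exact Real.exp_zero
          simp only [zero_div, Real.exp_zero]
          linear_combination γ * key
        rw [hK] at hIle
        have he1 : Real.exp (-x/μ) ≤ 1 := by
          rw [Real.exp_le_one_iff]
          exact div_nonpos_iff.mpr (Or.inr ⟨by linarith [hx.1], hpos.le⟩)
        have he0 := (Real.exp_pos (-x/μ)).le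
        nlinarith [hbm.2, hbm.1]
  refine ⟨⟨fun x μ => μ⁻¹ * (h x - ψ x μ), fun μ hμm hμ => ⟨hψd μ hμm hμ,
      (continuousOn_const.mul (hhc.sub (hψc μ hμm hμ))), fun x hx => by field_simp; ring⟩⟩,
    part2, part3, ?_⟩
  -- uniqueness
  rintro χ ⟨χ', hχ⟩ hχbc x hx μ hμm hμ
  -- positive case first, as a statement for all x
  have hpos : ∀ ν, ν ∈ Ioc (0:ℝ) 1 → ∀ y ∈ Icc (0:ℝ) B, χ y ν = ψ y ν := by
    intro ν hν y hy
    have hνm : ν ∈ Icc (-1:ℝ) 1 := ⟨by linarith [hν.1], hν.2⟩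
    have hν0 : ν ≠ 0 := ne_of_gt hν.1
    obtain ⟨hd, _, he⟩ := hχ ν hνm hν0
    have hw : ∀ z ∈ Icc (0:ℝ) B, HasDerivWithinAt (fun u => χ u ν - ψ u ν)
        (χ' z ν - ν⁻¹ * (h z - ψ z ν)) (Icc 0 B) z :=
      fun z hz => (hd z hz).sub (hψd ν hνm hν0 z hz)
    have hzeq : ∀ z ∈ Icc (0:ℝ) B, ν * (χ' z ν - ν⁻¹ * (h z - ψ z ν)) + (χ z ν - ψ z ν) = 0 := by
      intro z hz
      have h1 := he z hz
      field_simp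
      linarith [h1]
    have := ode_const hν0 hw hzeq y hy
    have h0 : χ 0 ν - ψ 0 ν = 0 := by
      rw [(hχbc ν hν).1, (part2 ν hν).1]; ring
    rw [h0] at this
    have := mul_eq_zero.mp this
    rcases this with hc | hc
    · exact absurd hc (Real.exp_ne_zero _)
    · linarith
  rcases lt_or_gt_of_ne hμ with hneg | hposμ
  · -- negative case
    have hνm : -μ ∈ Ioc (0:ℝ) 1 := ⟨by linarith, by linarith [hμm.1]⟩
    obtain ⟨hd, _, he⟩ := (by exact hχ μ hμm hμ :
      (∀ x ∈ Set.Icc (0:ℝ) B, HasDerivWithinAt (fun y => χ y μ) (χ' x μ) (Set.Icc 0 B) x) ∧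
      ContinuousOn (fun x => χ' x μ) (Set.Icc 0 B) ∧
      (∀ x ∈ Set.Icc (0:ℝ) B, μ * χ' x μ + χ x μ = h x))
    have hw : ∀ z ∈ Icc (0:ℝ) B, HasDerivWithinAt (fun u => χ u μ - ψ u μ)
        (χ' z μ - μ⁻¹ * (h z - ψ z μ)) (Icc 0 B) z :=
      fun z hz => (hd z hz).sub (hψd μ hμm hμ z hz)
    have hzeq : ∀ z ∈ Icc (0:ℝ) B, μ * (χ' z μ - μ⁻¹ * (h z - ψ z μ)) + (χ z μ - ψ z μ) = 0 := by
      intro z hz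
      have h1 := he z hz
      field_simp
      linarith [h1]
    have hconst := ode_const hμ hw hzeq
    have hBz : χ B μ - ψ B μ = 0 := by
      have h1 : χ B μ = χ B (-μ) := by
        have := (hχbc (-μ) hνm).2; rw [neg_neg] at this; exact this.symm
      have h2 : ψ B μ = ψ B (-μ) := by
        have := (part2 (-μ) hνm).2; rw [neg_neg] at this; exact this.symm
      rw [h1, h2, hpos (-μ) hνm B hBmm]; ring
    have h0 : χ 0 μ - ψ 0 μ = 0 := by
      have := hconst B hBmm
      rw [hBz] at this
      simpa using this.symm
    have := hconst x hx
    rw [h0] at this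
    rcases mul_eq_zero.mp this with hc | hc
    · exact absurd hc (Real.exp_ne_zero _)
    · linarith
  · exact hpos μ ⟨hposμ, hμm.2⟩ x hx
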